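/- arXiv:2503.20717 — 6 statements merged into one kernel-verified Lean document; each statement's English description precedes it below -/
import Mathlib

section
/- Let H1 be an r1 × n1 matrix over 𝔽₂ and H2 an r2 × n2 matrix over 𝔽₂. Define the hypergraph product check matrices H_X = [H1 ⊗ I_{n2} | I_{r1} ⊗ H2ᵀ] (an r1·n2 × (n1·n2 + r1·r2) matrix) and H_Z = [I_{n1} ⊗ H2 | H1ᵀ ⊗ I_{r2}] (an n1·r2 × (n1·n2 + r1·r2) matrix), where ⊗ denotes the Kronecker product. Then H_X · H_Zᵀ = 0 over 𝔽₂, i.e., the X-type and Z-type checks of the hypergraph product code commute. -/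
open Matrix
open scoped Kronecker

/-- The X-type check matrix of the hypergraph product code:
`H_X = [H1 ⊗ I_{n2} | I_{r1} ⊗ H2ᵀ]`. -/
def hgpX {r1 n1 r2 n2 : ℕ}
    (H1 : Matrix (Fin r1) (Fin n1) (ZMod 2)) (H2 : Matrix (Fin r2) (Fin n2) (ZMod 2)) :
    Matrix (Fin r1 × Fin n2) ((Fin n1 × Fin n2) ⊕ (Fin r1 × Fin r2)) (ZMod 2) :=
  Matrix.fromCols (H1 ⊗ₖ (1 : Matrix (Fin n2) (Fin n2) (ZMod 2)))
    ((1 : Matrix (Fin r1) (Fin r1) (ZMod 2)) ⊗ₖ H2ᵀ)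

/-- The Z-type check matrix of the hypergraph product code:
`H_Z = [I_{n1} ⊗ H2 | H1ᵀ ⊗ I_{r2}]`. -/
def hgpZ {r1 n1 r2 n2 : ℕ}
    (H1 : Matrix (Fin r1) (Fin n1) (ZMod 2)) (H2 : Matrix (Fin r2) (Fin n2) (ZMod 2)) :
    Matrix (Fin n1 × Fin r2) ((Fin n1 × Fin n2) ⊕ (Fin r1 × Fin r2)) (ZMod 2) :=
  Matrix.fromCols ((1 : Matrix (Fin n1) (Fin n1) (ZMod 2)) ⊗ₖ H2)
    (H1ᵀ ⊗ₖ (1 : Matrix (Fin r2) (Fin r2) (ZMod 2)))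

/-- The X-type and Z-type checks of the hypergraph product code commute:
`H_X · H_Zᵀ = 0` over 𝔽₂. -/
theorem hgp_checks_commute {r1 n1 r2 n2 : ℕ}
    (H1 : Matrix (Fin r1) (Fin n1) (ZMod 2)) (H2 : Matrix (Fin r2) (Fin n2) (ZMod 2)) :
    hgpX H1 H2 * (hgpZ H1 H2)ᵀ = 0 := by
  rw [hgpX, hgpZ, transpose_fromCols, fromCols_mul_fromRows,
    ← kroneckerMap_transpose, ← kroneckerMap_transpose, transpose_one, transpose_one,
    transpose_transpose, ← mul_kronecker_mul, ← mul_kronecker_mul,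
    Matrix.mul_one, Matrix.one_mul, Matrix.mul_one, Matrix.one_mul]
  ext i j
  simp [Matrix.add_apply, CharTwo.add_self_eq_zero]
end

section
/- Let H1 be an r1 × n1 matrix over 𝔽₂ and H2 an r2 × n2 matrix over 𝔽₂, with hypergraph product check matrices H_X = [H1 ⊗ I_{n2} | I_{r1} ⊗ H2ᵀ] and H_Z = [I_{n1} ⊗ H2 | H1ᵀ ⊗ I_{r2}]. Then rank(H_X) = n2·rank(H1) + r1·rank(H2) − rank(H1)·rank(H2) and rank(H_Z) = n1·rank(H2) + r2·rank(H1) − rank(H1)·rank(H2), where rank is the rank of a matrix over 𝔽₂. -/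
open Matrix
open scoped Kronecker

set_option linter.unusedSectionVars false

namespace HGP

open Module

variable {K : Type*} [Field K]
variable {a b c d : Type*} [Fintype a] [Fintype b] [Fintype c] [Fintype d]
variable [DecidableEq a] [DecidableEq c]

noncomputable def colProj (j : c) : ((a × c) → K) →ₗ[K] (a → K) :=
  LinearMap.funLeft K K (fun i : a => (i, j))

noncomputable def rowProj (i : a) : ((a × c) → K) →ₗ[K] (c → K) :=
  LinearMap.funLeft K K (fun j : c => (i, j))

@[simp] lemma colProj_apply (j : c) (v : (a × c) → K) (i : a) :
    colProj j v i = v (i, j) := rfl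

@[simp] lemma rowProj_apply (i : a) (v : (a × c) → K) (j : c) :
    rowProj i v j = v (i, j) := rfl

lemma kronecker_one_mulVec (A : Matrix a b K) (x : b × c → K) (i : a) (j : c) :
    ((A ⊗ₖ (1 : Matrix c c K)) *ᵥ x) (i, j) = ∑ p : b, A i p * x (p, j) := by
  simp [mulVec, dotProduct, Matrix.one_apply, Fintype.sum_prod_type, mul_ite, ite_mul,
    mul_zero, zero_mul, Finset.sum_ite_eq, Finset.sum_ite_eq']

lemma one_kronecker_mulVec (C : Matrix c d K) (x : a × d → K) (i : a) (j : c) :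
    (((1 : Matrix a a K) ⊗ₖ C) *ᵥ x) (i, j) = ∑ p : d, C j p * x (i, p) := by
  simp [mulVec, dotProduct, Matrix.one_apply, Fintype.sum_prod_type, mul_ite, ite_mul,
    mul_zero, zero_mul, Finset.sum_ite_eq, Finset.sum_ite_eq']

/-- the subspace of `a × c → K` whose columns all lie in `U` -/
noncomputable def colSpace (U : Submodule K (a → K)) : Submodule K ((a × c) → K) :=
  ⨅ j : c, Submodule.comap (colProj j) U

/-- the subspace of `a × c → K` whose rows all lie in `W` -/
noncomputable def rowSpace (W : Submodule K (c → K)) : Submodule K ((a × c) → K) :=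
  ⨅ i : a, Submodule.comap (rowProj i) W

lemma mem_colSpace {U : Submodule K (a → K)} {v : (a × c) → K} :
    v ∈ colSpace U ↔ ∀ j : c, colProj j v ∈ U := by
  simp [colSpace, Submodule.mem_iInf]

lemma mem_rowSpace {W : Submodule K (c → K)} {v : (a × c) → K} :
    v ∈ rowSpace (a := a) W ↔ ∀ i : a, rowProj i v ∈ W := by
  simp [rowSpace, Submodule.mem_iInf]

lemma range_kronecker_one (A : Matrix a b K) :
    LinearMap.range (A ⊗ₖ (1 : Matrix c c K)).mulVecLin
      = colSpace (c := c) (LinearMap.range A.mulVecLin) := by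
  ext v
  rw [mem_colSpace]
  constructor
  · rintro ⟨x, rfl⟩ j
    refine ⟨fun p => x (p, j), ?_⟩
    ext i
    show _ = ((A ⊗ₖ (1 : Matrix c c K)) *ᵥ x) (i, j)
    rw [kronecker_one_mulVec]
    simp [mulVecLin_apply, mulVec, dotProduct]
  · intro h
    choose y hy using h
    refine ⟨fun p => y p.2 p.1, ?_⟩
    ext ⟨i, j⟩
    show ((A ⊗ₖ (1 : Matrix c c K)) *ᵥ _) (i, j) = v (i, j)
    rw [kronecker_one_mulVec]
    have := congrFun (hy j) i
    simpa [mulVecLin_apply, mulVec, dotProduct] using this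

lemma range_one_kronecker (C : Matrix c d K) :
    LinearMap.range ((1 : Matrix a a K) ⊗ₖ C).mulVecLin
      = rowSpace (a := a) (LinearMap.range C.mulVecLin) := by
  ext v
  rw [mem_rowSpace]
  constructor
  · rintro ⟨x, rfl⟩ i
    refine ⟨fun p => x (i, p), ?_⟩
    ext j
    show _ = (((1 : Matrix a a K) ⊗ₖ C) *ᵥ x) (i, j)
    rw [one_kronecker_mulVec]
    simp [mulVecLin_apply, mulVec, dotProduct]
  · intro h
    choose y hy using h
    refine ⟨fun p => y p.1 p.2, ?_⟩
    ext ⟨i, j⟩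
    show (((1 : Matrix a a K) ⊗ₖ C) *ᵥ _) (i, j) = v (i, j)
    rw [one_kronecker_mulVec]
    have := congrFun (hy i) j
    simpa [mulVecLin_apply, mulVec, dotProduct] using this

lemma finrank_colSpace (U : Submodule K (a → K)) :
    finrank K (colSpace (c := c) U) = Fintype.card c * finrank K U := by
  have e : colSpace (c := c) U ≃ₗ[K] (c → U) :=
    { toFun := fun v => fun j => ⟨colProj j (v : (a × c) → K), mem_colSpace.mp v.2 j⟩
      map_add' := fun v w => by ext j i; rfl
      map_smul' := fun r v => by ext j i; rfl
      invFun := fun f => ⟨fun p => (f p.2 : a → K) p.1,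
        mem_colSpace.mpr fun j => by exact (f j).2⟩
      left_inv := fun v => by ext ⟨i, j⟩; rfl
      right_inv := fun f => by ext j i; rfl }
  rw [e.finrank_eq, Module.finrank_pi_fintype, Finset.sum_const, smul_eq_mul,
    Finset.card_univ]

lemma finrank_rowSpace (W : Submodule K (c → K)) :
    finrank K (rowSpace (a := a) W) = Fintype.card a * finrank K W := by
  have e : rowSpace (a := a) W ≃ₗ[K] (a → W) :=
    { toFun := fun v => fun i => ⟨rowProj i (v : (a × c) → K), mem_rowSpace.mp v.2 i⟩
      map_add' := fun v w => by ext i j; rfl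
      map_smul' := fun r v => by ext i j; rfl
      invFun := fun f => ⟨fun p => (f p.1 : c → K) p.2,
        mem_rowSpace.mpr fun i => by exact (f i).2⟩
      left_inv := fun v => by ext ⟨i, j⟩; rfl
      right_inv := fun f => by ext i j; rfl }
  rw [e.finrank_eq, Module.finrank_pi_fintype, Finset.sum_const, smul_eq_mul,
    Finset.card_univ]

lemma finrank_colSpace_inf_rowSpace (U : Submodule K (a → K)) (W : Submodule K (c → K)) :
    finrank K ((colSpace (c := c) U ⊓ rowSpace (a := a) W :
      Submodule K ((a × c) → K)) : Submodule K ((a × c) → K))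
      = finrank K U * finrank K W := by
  classical
  set k := finrank K U with hk
  let bu : Basis (Fin k) K U := Module.finBasis K U
  choose φ hφ using fun i : Fin k => LinearMap.exists_extend (bu.coord i)
  have hφ' : ∀ (i : Fin k) (u : U), φ i (u : a → K) = bu.coord i u := fun i u =>
    LinearMap.congr_fun (hφ i) u
  -- key decomposition of the coefficient rows
  have hrow : ∀ (v : (a × c) → K) (i : Fin k),
      (fun j => φ i (colProj (a := a) j v)) = ∑ t : a, φ i (Pi.single t (1 : K) : a → K) • rowProj t v := by
    intro v i
    ext j
    have hcol : colProj (a := a) j v = ∑ t : a, v (t, j) • (Pi.single t (1 : K) : a → K) := by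
      ext t
      simp [Pi.single_apply, Finset.sum_ite_eq', mul_comm]
    rw [hcol, map_sum]
    simp [Finset.sum_apply, smul_eq_mul, mul_comm]
  have memW : ∀ (v : (colSpace (c := c) U ⊓ rowSpace (a := a) W :
      Submodule K ((a × c) → K))) (i : Fin k),
      (fun j => φ i (colProj (a := a) j (v : (a × c) → K))) ∈ W := by
    intro v i
    rw [hrow]
    exact Submodule.sum_mem _ fun t _ => Submodule.smul_mem _ _
      (mem_rowSpace.mp (Submodule.mem_inf.mp v.2).2 t)
  let F : (colSpace (c := c) U ⊓ rowSpace (a := a) W : Submodule K ((a × c) → K))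
      →ₗ[K] (Fin k → W) :=
    { toFun := fun v => fun i => ⟨fun j => φ i (colProj (a := a) j (v : (a × c) → K)),
        memW v i⟩
      map_add' := fun v w => by ext i j; simp
      map_smul' := fun r v => by ext i j; simp }
  have hinj : Function.Injective F := by
    intro v w hvw
    have h0 : ∀ (i : Fin k) (j : c),
        φ i (colProj (a := a) j (v : (a × c) → K)) =
        φ i (colProj (a := a) j (w : (a × c) → K)) := by
      intro i j
      exact congrFun (congrArg Subtype.val (congrFun hvw i)) j
    ext ⟨t, j⟩
    have hu : ∀ (z : (colSpace (c := c) U ⊓ rowSpace (a := a) W :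
        Submodule K ((a × c) → K))), colProj (a := a) j (z : (a × c) → K) ∈ U :=
      fun z => mem_colSpace.mp (Submodule.mem_inf.mp z.2).1 j
    have : (⟨colProj (a := a) j (v : (a × c) → K), hu v⟩ : U) =
        ⟨colProj (a := a) j (w : (a × c) → K), hu w⟩ := by
      apply bu.ext_elem
      intro i
      have h1 := hφ' i ⟨colProj (a := a) j (v : (a × c) → K), hu v⟩
      have h2 := hφ' i ⟨colProj (a := a) j (w : (a × c) → K), hu w⟩
      simp only [Basis.coord_apply] at h1 h2
      rw [← h1, ← h2]
      exact h0 i j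
    have := congrFun (congrArg Subtype.val this) t
    simpa using this
  have hsurj : Function.Surjective F := by
    intro g
    set v : (a × c) → K := fun p => ∑ i : Fin k, ((bu i : U) : a → K) p.1 * ((g i : c → K)) p.2
      with hv
    have hcol : ∀ j : c, colProj (a := a) j v =
        ((∑ i : Fin k, ((g i : c → K) j) • bu i : U) : a → K) := by
      intro j
      ext t
      simp [hv, mul_comm, Submodule.coe_sum]
    have hmem : v ∈ colSpace (c := c) U ⊓ rowSpace (a := a) W := by
      constructor
      · exact mem_colSpace.mpr fun j => by rw [hcol]; exact Submodule.coe_mem _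
      · refine mem_rowSpace.mpr fun t => ?_
        have : rowProj (a := a) t v = ∑ i : Fin k, (((bu i : U) : a → K) t) • ((g i : c → K)) := by
          ext j
          simp [hv, Finset.sum_apply, smul_eq_mul]
        rw [this]
        exact Submodule.sum_mem _ fun i _ => Submodule.smul_mem _ _ (Submodule.coe_mem (g i))
    refine ⟨⟨v, hmem⟩, ?_⟩
    ext i j
    show φ i (colProj (a := a) j v) = (g i : c → K) j
    rw [hcol j, hφ' i]
    simp [Basis.coord_apply, map_sum, Basis.repr_self, Finsupp.single_apply,
      Finset.sum_ite_eq']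
  have e := LinearEquiv.ofBijective F ⟨hinj, hsurj⟩
  rw [e.finrank_eq, Module.finrank_pi_fintype, Finset.sum_const, smul_eq_mul,
    Finset.card_univ, Fintype.card_fin]

lemma range_fromColumns {m n₁ n₂ : Type*} [Fintype n₁] [Fintype n₂]
    (A₁ : Matrix m n₁ K) (A₂ : Matrix m n₂ K) :
    LinearMap.range (fromCols A₁ A₂).mulVecLin
      = LinearMap.range A₁.mulVecLin ⊔ LinearMap.range A₂.mulVecLin := by
  apply le_antisymm
  · rintro _ ⟨z, rfl⟩
    rw [mulVecLin_apply, ← Sum.elim_comp_inl_inr z, fromCols_mulVec_sumElim]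
    exact Submodule.add_mem_sup ⟨_, rfl⟩ ⟨_, rfl⟩
  · rw [sup_le_iff]
    constructor
    · rintro _ ⟨x, rfl⟩
      exact ⟨Sum.elim x 0, by rw [mulVecLin_apply, fromCols_mulVec_sumElim,
        mulVec_zero, add_zero, mulVecLin_apply]⟩
    · rintro _ ⟨x, rfl⟩
      exact ⟨Sum.elim 0 x, by rw [mulVecLin_apply, fromCols_mulVec_sumElim,
        mulVec_zero, zero_add, mulVecLin_apply]⟩

lemma rank_hgp_general (A : Matrix a b K) (C : Matrix c d K) :
    (fromCols (A ⊗ₖ (1 : Matrix c c K)) ((1 : Matrix a a K) ⊗ₖ C)).rank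
      = Fintype.card c * A.rank + Fintype.card a * C.rank - A.rank * C.rank := by
  rw [Matrix.rank, range_fromColumns, range_kronecker_one, range_one_kronecker]
  have h := Submodule.finrank_sup_add_finrank_inf_eq
    (colSpace (c := c) (LinearMap.range A.mulVecLin))
    (rowSpace (a := a) (LinearMap.range C.mulVecLin))
  rw [finrank_colSpace, finrank_rowSpace, finrank_colSpace_inf_rowSpace] at h
  have hA : finrank K (LinearMap.range A.mulVecLin) = A.rank := rfl
  have hC : finrank K (LinearMap.range C.mulVecLin) = C.rank := rfl
  rw [hA, hC] at h
  omega

end HGP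

/-- Ranks of the hypergraph product check matrices:
`rank(H_X) = n2·rank(H1) + r1·rank(H2) − rank(H1)·rank(H2)` and
`rank(H_Z) = n1·rank(H2) + r2·rank(H1) − rank(H1)·rank(H2)`. -/
theorem hgp_rank {r1 n1 r2 n2 : ℕ}
    (H1 : Matrix (Fin r1) (Fin n1) (ZMod 2)) (H2 : Matrix (Fin r2) (Fin n2) (ZMod 2)) :
    (hgpX H1 H2).rank = n2 * H1.rank + r1 * H2.rank - H1.rank * H2.rank ∧
    (hgpZ H1 H2).rank = n1 * H2.rank + r2 * H1.rank - H1.rank * H2.rank := by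
  constructor
  · have h := HGP.rank_hgp_general (K := ZMod 2) H1 H2ᵀ
    rw [Matrix.rank_transpose, Fintype.card_fin, Fintype.card_fin] at h
    exact h
  · have h := HGP.rank_hgp_general (K := ZMod 2) H1ᵀ H2
    rw [Matrix.rank_transpose, Fintype.card_fin, Fintype.card_fin] at h
    have hswap : (hgpZ H1 H2).rank
        = (Matrix.fromCols (H1ᵀ ⊗ₖ (1 : Matrix (Fin r2) (Fin r2) (ZMod 2)))
            ((1 : Matrix (Fin n1) (Fin n1) (ZMod 2)) ⊗ₖ H2)).rank := by
      unfold hgpZ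
      rw [Matrix.rank, Matrix.rank, HGP.range_fromColumns, HGP.range_fromColumns, sup_comm]
    rw [hswap, h]
    omega
end

section
/- Let H1 be an r1 × n1 matrix over 𝔽₂ and H2 an r2 × n2 matrix over 𝔽₂, with hypergraph product check matrices H_X = [H1 ⊗ I_{n2} | I_{r1} ⊗ H2ᵀ] and H_Z = [I_{n1} ⊗ H2 | H1ᵀ ⊗ I_{r2}]. Writing k1 = n1 − rank(H1), k2 = n2 − rank(H2), k1ᵀ = r1 − rank(H1), k2ᵀ = r2 − rank(H2), the number of logical qubits of the hypergraph product code satisfies (n1·n2 + r1·r2) − rank(H_X) − rank(H_Z) = k1·k2 + k1ᵀ·k2ᵀ. -/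
open Matrix
open scoped Kronecker

open Module Submodule

namespace HGP

variable {F : Type*} [Field F]

/-- canonical rank-`a` pattern matrix -/
def Ecan (F : Type*) [Field F] (r n a : ℕ) : Matrix (Fin r) (Fin n) F :=
  Matrix.of fun i j => if (i : ℕ) = (j : ℕ) ∧ (i : ℕ) < a then 1 else 0

lemma card_filter_le (r a : ℕ) :
    (Finset.univ.filter (fun i : Fin r => a ≤ (i : ℕ))).card = r - a := by
  rcases lt_or_ge a r with h | h
  · have : (Finset.univ.filter (fun i : Fin r => a ≤ (i : ℕ))) = Finset.Ici (⟨a, h⟩ : Fin r) := by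
      ext i
      simp [Fin.le_def]
    rw [this, Fin.card_Ici]
  · have : (Finset.univ.filter (fun i : Fin r => a ≤ (i : ℕ))) = ∅ := by
      ext i
      simp only [Finset.mem_filter, Finset.mem_univ, true_and, Finset.notMem_empty, iff_false,
        not_le]
      exact lt_of_lt_of_le i.isLt h
    rw [this]
    simp [Nat.sub_eq_zero_of_le h]

lemma card_S (r m a b : ℕ) :
    (Finset.univ.filter (fun p : Fin r × Fin m => (p.1 : ℕ) < a ∨ (p.2 : ℕ) < b)).card
      = r * m - (r - a) * (m - b) := by
  classical
  have hneg : (Finset.univ.filter (fun p : Fin r × Fin m => ¬((p.1 : ℕ) < a ∨ (p.2 : ℕ) < b))).card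
      = (r - a) * (m - b) := by
    have he : (Finset.univ.filter (fun p : Fin r × Fin m => ¬((p.1 : ℕ) < a ∨ (p.2 : ℕ) < b)))
        = (Finset.univ.filter (fun i : Fin r => a ≤ (i : ℕ))) ×ˢ
          (Finset.univ.filter (fun j : Fin m => b ≤ (j : ℕ))) := by
      ext p
      simp [not_or, not_lt, Finset.mem_product]
    rw [he, Finset.card_product, card_filter_le, card_filter_le]
  have htot := Finset.card_filter_add_card_filter_not
    (s := (Finset.univ : Finset (Fin r × Fin m)))
    (p := fun p : Fin r × Fin m => (p.1 : ℕ) < a ∨ (p.2 : ℕ) < b)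
  have hcard : (Finset.univ : Finset (Fin r × Fin m)).card = r * m := by
    simp
  have hle : (r - a) * (m - b) ≤ r * m :=
    Nat.mul_le_mul (Nat.sub_le _ _) (Nat.sub_le _ _)
  omega

lemma rank_eq_card_of_cols {m n : Type*} [Fintype m] [Fintype n] [DecidableEq m]
    (M : Matrix m n F) (S : Finset m)
    (h1 : ∀ j, Mᵀ j = 0 ∨ ∃ i ∈ S, Mᵀ j = Pi.single i 1)
    (h2 : ∀ i ∈ S, ∃ j, Mᵀ j = Pi.single i 1) :
    M.rank = S.card := by
  classical
  rw [Matrix.rank_eq_finrank_span_cols]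
  have hspan : Submodule.span F (Set.range Mᵀ)
      = Submodule.span F (Set.range (fun i : S => (Pi.single (i : m) (1 : F) : m → F))) := by
    apply le_antisymm
    · rw [Submodule.span_le]
      rintro _ ⟨j, rfl⟩
      rcases h1 j with h | ⟨i, hi, h⟩
      · rw [h]; exact Submodule.zero_mem _
      · rw [h]; exact Submodule.subset_span ⟨⟨i, hi⟩, rfl⟩
    · rw [Submodule.span_le]
      rintro _ ⟨⟨i, hi⟩, rfl⟩
      obtain ⟨j, hj⟩ := h2 i hi
      show (Pi.single (i : m) (1 : F) : m → F) ∈ _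
      rw [← hj]
      exact Submodule.subset_span ⟨j, rfl⟩
  have hli : LinearIndependent F (fun i : S => (Pi.single (i : m) (1 : F) : m → F)) := by
    have h := (Pi.basisFun F m).linearIndependent.comp (Subtype.val : S → m)
      Subtype.val_injective
    have he : (fun i : S => (Pi.single (i : m) (1 : F) : m → F))
        = (⇑(Pi.basisFun F m)) ∘ (Subtype.val : S → m) := by
      funext i
      simp [Function.comp_def, Pi.basisFun_apply]
    rw [he]
    exact h
  change finrank F (Submodule.span F (Set.range Mᵀ)) = S.card
  rw [hspan, finrank_span_eq_card hli, Fintype.card_coe]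


lemma exists_canonical {r n : ℕ} (H : Matrix (Fin r) (Fin n) F) :
    ∃ (P : Matrix (Fin r) (Fin r) F) (Q : Matrix (Fin n) (Fin n) F), IsUnit (Matrix.det P) ∧ IsUnit (Matrix.det Q) ∧
      H = P * (Ecan F r n H.rank) * Q := by
  classical
  set a := H.rank with ha
  have har : a ≤ r := H.rank_le_height
  have han : a ≤ n := H.rank_le_width
  set f := H.mulVecLin with hf
  obtain ⟨Rc, hRc⟩ := (LinearMap.range f).exists_isCompl
  obtain ⟨Kc, hKc⟩ := (LinearMap.ker f).exists_isCompl
  have hfinW : finrank F (Fin r → F) = r := by simp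
  have hfinV : finrank F (Fin n → F) = n := by simp
  have hfinR : finrank F (LinearMap.range f) = a := rfl
  have hsum1 := Submodule.finrank_add_eq_of_isCompl hRc
  have hsum2 := Submodule.finrank_add_eq_of_isCompl hKc
  have hrn := LinearMap.finrank_range_add_finrank_ker f
  rw [hfinV] at hrn hsum2
  rw [hfinW] at hsum1
  rw [hfinR] at hrn hsum1
  have hfinRc : finrank F Rc = r - a := by omega
  have hfinK : finrank F (LinearMap.ker f) = n - a := by omega
  have hfinKc : finrank F Kc = a := by omega
  -- the restricted map
  let g : Kc →ₗ[F] (Fin r → F) := f.domRestrict Kc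
  have hginj : Function.Injective g := by
    rw [← LinearMap.ker_eq_bot]
    rw [LinearMap.ker_domRestrict]
    rw [Submodule.eq_bot_iff]
    rintro ⟨x, hxKc⟩ hx
    simp only [Submodule.mem_comap, Submodule.coe_subtype] at hx
    have hx0 : x = 0 :=
      (Submodule.mem_bot F).mp (hKc.disjoint.le_bot ⟨hx, hxKc⟩)
    exact Subtype.ext hx0
  have hgrange : LinearMap.range g = LinearMap.range f := by
    rw [LinearMap.range_domRestrict]
    have hmap : Submodule.map f (LinearMap.ker f) = ⊥ := by
      rw [Submodule.eq_bot_iff]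
      rintro _ ⟨x, hx, rfl⟩
      exact hx
    have hsup : Submodule.map f (LinearMap.ker f) ⊔ Submodule.map f Kc
        = LinearMap.range f := by
      rw [← Submodule.map_sup, hKc.codisjoint.eq_top, Submodule.map_top]
    rw [hmap, bot_sup_eq] at hsup
    exact hsup
  let e : Kc ≃ₗ[F] LinearMap.range f :=
    (LinearEquiv.ofInjective g hginj).trans (LinearEquiv.ofEq _ _ hgrange)
  have he_apply : ∀ x : Kc, (e x : Fin r → F) = f (x : (Fin n → F)) := by
    intro x
    rfl
  -- bases
  let bR : Basis (Fin a) F (LinearMap.range f) := Module.finBasisOfFinrankEq F _ hfinR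
  let bRc : Basis (Fin (r - a)) F Rc := Module.finBasisOfFinrankEq F _ hfinRc
  let bK : Basis (Fin (n - a)) F (LinearMap.ker f) := Module.finBasisOfFinrankEq F _ hfinK
  let bKc : Basis (Fin a) F Kc := bR.map e.symm
  let eW : (Fin a ⊕ Fin (r - a)) ≃ Fin r :=
    finSumFinEquiv.trans (finCongr (by omega))
  let eV : (Fin a ⊕ Fin (n - a)) ≃ Fin n :=
    finSumFinEquiv.trans (finCongr (by omega))
  let bW : Basis (Fin r) F (Fin r → F) :=
    ((bR.prod bRc).map (Submodule.prodEquivOfIsCompl _ _ hRc)).reindex eW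
  let bV : Basis (Fin n) F (Fin n → F) :=
    ((bKc.prod bK).map (Submodule.prodEquivOfIsCompl _ _ hKc.symm)).reindex eV
  have hbW_inl : ∀ k : Fin a, bW (eW (Sum.inl k)) = (bR k : Fin r → F) := by
    intro k
    simp only [bW, Basis.reindex_apply, Equiv.symm_apply_apply, Basis.map_apply,
      Basis.prod_apply, Sum.elim_inl]
    simp [Submodule.coe_prodEquivOfIsCompl']
  have hbV_inl : ∀ k : Fin a, bV (eV (Sum.inl k)) = (bKc k : Fin n → F) := by
    intro k
    simp only [bV, Basis.reindex_apply, Equiv.symm_apply_apply, Basis.map_apply,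
      Basis.prod_apply, Sum.elim_inl]
    simp [Submodule.coe_prodEquivOfIsCompl']
  have hbV_inr : ∀ k : Fin (n - a), bV (eV (Sum.inr k)) = (bK k : Fin n → F) := by
    intro k
    simp only [bV, Basis.reindex_apply, Equiv.symm_apply_apply, Basis.map_apply,
      Basis.prod_apply, Sum.elim_inr]
    simp [Submodule.coe_prodEquivOfIsCompl']
  -- the matrix of f in these bases is the canonical pattern
  have hmat : LinearMap.toMatrix bV bW f = Ecan F r n a := by
    ext i j
    obtain ⟨t, rfl⟩ : ∃ t, j = eV t := ⟨eV.symm j, (eV.apply_symm_apply j).symm⟩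
    rw [LinearMap.toMatrix_apply]
    cases t with
    | inl k =>
        have hfb : f (bV (eV (Sum.inl k))) = bW (eW (Sum.inl k)) := by
          rw [hbV_inl, hbW_inl]
          have : bKc k = e.symm (bR k) := by simp [bKc]
          rw [this, ← he_apply]
          simp
        rw [hfb, Basis.repr_self]
        have hj : ((eV (Sum.inl k) : Fin n) : ℕ) = (k : ℕ) := by
          simp [eV]
        have hiW : ((eW (Sum.inl k) : Fin r) : ℕ) = (k : ℕ) := by
          simp [eW]
        simp only [Ecan, Matrix.of_apply, Finsupp.single_apply, Fin.ext_iff, hiW, hj]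
        by_cases h : (i : ℕ) = (k : ℕ)
        · rw [if_pos h.symm, if_pos ⟨h, by rw [h]; exact k.isLt⟩]
        · rw [if_neg (fun hh => h hh.symm), if_neg (by tauto)]
    | inr k =>
        have hfb : f (bV (eV (Sum.inr k))) = 0 := by
          rw [hbV_inr]
          exact (bK k).2
        rw [hfb]
        simp only [map_zero, Finsupp.coe_zero, Pi.zero_apply, Ecan, Matrix.of_apply]
        have hj : ((eV (Sum.inr k) : Fin n) : ℕ) = a + (k : ℕ) := by
          simp [eV]
        rw [hj]
        have : ¬ ((i : ℕ) = a + (k : ℕ) ∧ (i : ℕ) < a) := by omega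
        simp [this]
  -- base change
  have hH : LinearMap.toMatrix (Pi.basisFun F (Fin n)) (Pi.basisFun F (Fin r)) f = H := by
    ext i j
    rw [LinearMap.toMatrix_apply]
    simp [f, Matrix.mulVecLin_apply, Pi.basisFun_apply, Matrix.mulVec_single_one]
  refine ⟨(Pi.basisFun F (Fin r)).toMatrix bW, bV.toMatrix (Pi.basisFun F (Fin n)), ?_, ?_, ?_⟩
  · have : Invertible ((Pi.basisFun F (Fin r)).toMatrix bW) :=
      Basis.invertibleToMatrix (Pi.basisFun F (Fin r)) bW
    exact (Matrix.isUnit_iff_isUnit_det _).mp (isUnit_of_invertible _)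
  · have : Invertible (bV.toMatrix (Pi.basisFun F (Fin n))) :=
      Basis.invertibleToMatrix bV (Pi.basisFun F (Fin n))
    exact (Matrix.isUnit_iff_isUnit_det _).mp (isUnit_of_invertible _)
  · rw [← hmat, ← hH]
    rw [basis_toMatrix_mul_linearMap_toMatrix_mul_basis_toMatrix]


lemma rank_canon {r n m s a b : ℕ} (har : a ≤ r) (han : a ≤ n) (hbm : b ≤ m) (hbs : b ≤ s) :
    (Matrix.fromCols ((Ecan F r n a) ⊗ₖ (1 : Matrix (Fin m) (Fin m) F))
      ((1 : Matrix (Fin r) (Fin r) F) ⊗ₖ (Ecan F m s b))).rank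
      = r * m - (r - a) * (m - b) := by
  classical
  rw [rank_eq_card_of_cols _ (Finset.univ.filter
      (fun p : Fin r × Fin m => (p.1 : ℕ) < a ∨ (p.2 : ℕ) < b))]
  · exact card_S r m a b
  · rintro (⟨c1, c2⟩ | ⟨d1, d2⟩)
    · by_cases h : (c1 : ℕ) < a
      · refine Or.inr ⟨(⟨(c1 : ℕ), lt_of_lt_of_le h har⟩, c2), by simp [h], ?_⟩
        funext p
        obtain ⟨p1, p2⟩ := p
        simp only [Matrix.transpose_apply, Matrix.fromCols_apply_inl,
          Matrix.kroneckerMap_apply, Ecan, Matrix.of_apply, Matrix.one_apply, Pi.single_apply,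
          Prod.mk.injEq, Fin.ext_iff]
        by_cases h1 : (p1 : ℕ) = (c1 : ℕ) <;> by_cases h2 : p2 = c2 <;>
          simp [h1, h2, h, Fin.ext_iff]
      · refine Or.inl ?_
        funext p
        obtain ⟨p1, p2⟩ := p
        simp only [Matrix.transpose_apply, Matrix.fromCols_apply_inl,
          Matrix.kroneckerMap_apply, Ecan, Matrix.of_apply, Pi.zero_apply]
        have : ¬ ((p1 : ℕ) = (c1 : ℕ) ∧ (p1 : ℕ) < a) := by
          rintro ⟨h1, h2⟩; exact h (h1 ▸ h2)
        simp [this]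
    · by_cases h : (d2 : ℕ) < b
      · refine Or.inr ⟨(d1, ⟨(d2 : ℕ), lt_of_lt_of_le h hbm⟩), by simp [h], ?_⟩
        funext p
        obtain ⟨p1, p2⟩ := p
        simp only [Matrix.transpose_apply, Matrix.fromCols_apply_inr,
          Matrix.kroneckerMap_apply, Ecan, Matrix.of_apply, Matrix.one_apply, Pi.single_apply,
          Prod.mk.injEq, Fin.ext_iff]
        by_cases h1 : p1 = d1 <;> by_cases h2 : (p2 : ℕ) = (d2 : ℕ) <;>
          simp [h1, h2, h, Fin.ext_iff]
      · refine Or.inl ?_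
        funext p
        obtain ⟨p1, p2⟩ := p
        simp only [Matrix.transpose_apply, Matrix.fromCols_apply_inr,
          Matrix.kroneckerMap_apply, Ecan, Matrix.of_apply, Pi.zero_apply]
        have : ¬ ((p2 : ℕ) = (d2 : ℕ) ∧ (p2 : ℕ) < b) := by
          rintro ⟨h1, h2⟩; exact h (h1 ▸ h2)
        simp [this]
  · rintro ⟨i, j⟩ hij
    simp only [Finset.mem_filter, Finset.mem_univ, true_and] at hij
    rcases hij with h | h
    · refine ⟨Sum.inl (⟨(i : ℕ), lt_of_lt_of_le h han⟩, j), ?_⟩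
      funext p
      obtain ⟨p1, p2⟩ := p
      simp only [Matrix.transpose_apply, Matrix.fromCols_apply_inl,
        Matrix.kroneckerMap_apply, Ecan, Matrix.of_apply, Matrix.one_apply, Pi.single_apply,
        Prod.mk.injEq, Fin.ext_iff]
      by_cases h1 : (p1 : ℕ) = (i : ℕ) <;> by_cases h2 : p2 = j <;>
        simp [h1, h2, h, Fin.ext_iff]
    · refine ⟨Sum.inr (i, ⟨(j : ℕ), lt_of_lt_of_le h hbs⟩), ?_⟩
      funext p
      obtain ⟨p1, p2⟩ := p
      simp only [Matrix.transpose_apply, Matrix.fromCols_apply_inr,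
        Matrix.kroneckerMap_apply, Ecan, Matrix.of_apply, Matrix.one_apply, Pi.single_apply,
        Prod.mk.injEq, Fin.ext_iff]
      by_cases h1 : p1 = i <;> by_cases h2 : (p2 : ℕ) = (j : ℕ) <;>
        simp [h1, h2, h, Fin.ext_iff]

lemma rank_hgp {r n m s : ℕ} [DecidableEq F]
    (A : Matrix (Fin r) (Fin n) F) (B : Matrix (Fin m) (Fin s) F) :
    (Matrix.fromCols (A ⊗ₖ (1 : Matrix (Fin m) (Fin m) F))
      ((1 : Matrix (Fin r) (Fin r) F) ⊗ₖ B)).rank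
      = r * m - (r - A.rank) * (m - B.rank) := by
  classical
  obtain ⟨P1, Q1, hP1, hQ1, hA⟩ := exists_canonical A
  obtain ⟨P2, Q2, hP2, hQ2, hB⟩ := exists_canonical B
  set a := A.rank with ha
  set b := B.rank with hb
  have key : Matrix.fromCols (A ⊗ₖ (1 : Matrix (Fin m) (Fin m) F))
        ((1 : Matrix (Fin r) (Fin r) F) ⊗ₖ B)
      = (P1 ⊗ₖ P2) *
        ((Matrix.fromCols ((Ecan F r n a) ⊗ₖ (1 : Matrix (Fin m) (Fin m) F))
          ((1 : Matrix (Fin r) (Fin r) F) ⊗ₖ (Ecan F m s b))) *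
        Matrix.fromBlocks (Q1 ⊗ₖ P2⁻¹) 0 0 (P1⁻¹ ⊗ₖ Q2)) := by
    have hblk1 : (P1 ⊗ₖ P2) * (((Ecan F r n a) ⊗ₖ (1 : Matrix (Fin m) (Fin m) F))
        * (Q1 ⊗ₖ P2⁻¹)) = A ⊗ₖ (1 : Matrix (Fin m) (Fin m) F) := by
      rw [← Matrix.mul_kronecker_mul (Ecan F r n a) Q1
        (1 : Matrix (Fin m) (Fin m) F) P2⁻¹]
      rw [← Matrix.mul_kronecker_mul P1 (Ecan F r n a * Q1) P2 (1 * P2⁻¹)]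
      rw [Matrix.one_mul, Matrix.mul_nonsing_inv _ hP2, ← Matrix.mul_assoc, ← hA]
    have hblk2 : (P1 ⊗ₖ P2) * (((1 : Matrix (Fin r) (Fin r) F) ⊗ₖ (Ecan F m s b))
        * (P1⁻¹ ⊗ₖ Q2)) = (1 : Matrix (Fin r) (Fin r) F) ⊗ₖ B := by
      rw [← Matrix.mul_kronecker_mul (1 : Matrix (Fin r) (Fin r) F) P1⁻¹
        (Ecan F m s b) Q2]
      rw [← Matrix.mul_kronecker_mul P1 ((1 : Matrix (Fin r) (Fin r) F) * P1⁻¹) P2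
        (Ecan F m s b * Q2)]
      rw [Matrix.one_mul, Matrix.mul_nonsing_inv _ hP1, ← Matrix.mul_assoc, ← hB]
    rw [Matrix.fromCols_mul_fromBlocks, Matrix.mul_fromCols,
      Matrix.mul_zero, Matrix.mul_zero, add_zero, zero_add, hblk1, hblk2]
  rw [key]
  have hu1 : IsUnit (P1 ⊗ₖ P2).det := by
    rw [Matrix.det_kronecker]
    exact (hP1.pow _).mul (hP2.pow _)
  rw [Matrix.rank_mul_eq_right_of_isUnit_det _ _ hu1]
  have hu2 : IsUnit (Matrix.fromBlocks (Q1 ⊗ₖ P2⁻¹) 0 0 (P1⁻¹ ⊗ₖ Q2)).det := by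
    rw [Matrix.det_fromBlocks_zero₂₁, Matrix.det_kronecker, Matrix.det_kronecker,
      Matrix.det_nonsing_inv, Matrix.det_nonsing_inv]
    exact (((hQ1.pow _).mul ((isUnit_ringInverse.mpr hP2).pow _)).mul
      (((isUnit_ringInverse.mpr hP1).pow _).mul (hQ2.pow _)))
  rw [Matrix.rank_mul_eq_left_of_isUnit_det _ _ hu2]
  exact rank_canon A.rank_le_height A.rank_le_width B.rank_le_height B.rank_le_width


omit [Field F] in
lemma range_fromRows {m₁ m₂ n : Type*} (A : Matrix m₁ n F) (B : Matrix m₂ n F) :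
    Set.range (Matrix.fromRows A B) = Set.range A ∪ Set.range B := by
  ext v
  constructor
  · rintro ⟨(i | i), rfl⟩
    · exact Or.inl ⟨i, rfl⟩
    · exact Or.inr ⟨i, rfl⟩
  · rintro (⟨i, rfl⟩ | ⟨i, rfl⟩)
    · exact ⟨Sum.inl i, rfl⟩
    · exact ⟨Sum.inr i, rfl⟩

lemma rank_fromCols_comm {m n₁ n₂ : Type*} [Fintype m] [Fintype n₁] [Fintype n₂]
    (A : Matrix m n₁ F) (B : Matrix m n₂ F) :
    (Matrix.fromCols A B).rank = (Matrix.fromCols B A).rank := by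
  rw [Matrix.rank_eq_finrank_span_cols, Matrix.rank_eq_finrank_span_cols]
  change finrank F (span F (Set.range (Matrix.fromCols A B)ᵀ))
    = finrank F (span F (Set.range (Matrix.fromCols B A)ᵀ))
  rw [Matrix.transpose_fromCols, Matrix.transpose_fromCols,
    range_fromRows, range_fromRows, Set.union_comm]

end HGP

open HGP

/-- The number of logical qubits of the hypergraph product code:
`(n1·n2 + r1·r2) − rank(H_X) − rank(H_Z) = k1·k2 + k1ᵀ·k2ᵀ`, where
`k1 = n1 − rank(H1)`, `k2 = n2 − rank(H2)`, `k1ᵀ = r1 − rank(H1)`, `k2ᵀ = r2 − rank(H2)`. -/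
theorem hgp_logical_qubits {r1 n1 r2 n2 : ℕ}
    (H1 : Matrix (Fin r1) (Fin n1) (ZMod 2)) (H2 : Matrix (Fin r2) (Fin n2) (ZMod 2)) :
    (n1 * n2 + r1 * r2) - (hgpX H1 H2).rank - (hgpZ H1 H2).rank =
      (n1 - H1.rank) * (n2 - H2.rank) + (r1 - H1.rank) * (r2 - H2.rank) := by
  classical
  set a := H1.rank with ha
  set b := H2.rank with hb
  have har : a ≤ r1 := H1.rank_le_height
  have han : a ≤ n1 := H1.rank_le_width
  have hbr : b ≤ r2 := H2.rank_le_height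
  have hbn : b ≤ n2 := H2.rank_le_width
  set X := (hgpX H1 H2).rank with hX0
  set Z := (hgpZ H1 H2).rank with hZ0
  set x := r1 - a with hx
  set y := n2 - b with hy
  set u := n1 - a with hu
  set v := r2 - b with hv
  have hXeq : X = r1 * n2 - x * y := by
    rw [hX0]
    show (Matrix.fromCols (H1 ⊗ₖ (1 : Matrix (Fin n2) (Fin n2) (ZMod 2)))
      ((1 : Matrix (Fin r1) (Fin r1) (ZMod 2)) ⊗ₖ H2ᵀ)).rank = _
    rw [rank_hgp H1 H2ᵀ, Matrix.rank_transpose, ← ha, ← hb]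
  have hZeq : Z = n1 * r2 - u * v := by
    rw [hZ0]
    show (Matrix.fromCols ((1 : Matrix (Fin n1) (Fin n1) (ZMod 2)) ⊗ₖ H2)
      (H1ᵀ ⊗ₖ (1 : Matrix (Fin r2) (Fin r2) (ZMod 2)))).rank = _
    rw [rank_fromCols_comm, rank_hgp H1ᵀ H2, Matrix.rank_transpose, ← ha, ← hb]
  have hr1 : r1 = a + x := by omega
  have hn1 : n1 = a + u := by omega
  have hn2 : n2 = b + y := by omega
  have hr2 : r2 = b + v := by omega
  have hXeq' : X = a * b + a * y + x * b := by
    rw [hXeq, hr1, hn2]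
    have : (a + x) * (b + y) = (a * b + a * y + x * b) + x * y := by ring
    rw [this, Nat.add_sub_cancel]
  have hZeq' : Z = a * b + a * v + u * b := by
    rw [hZeq, hn1, hr2]
    have : (a + u) * (b + v) = (a * b + a * v + u * b) + u * v := by ring
    rw [this, Nat.add_sub_cancel]
  have hmain : n1 * n2 + r1 * r2 = X + Z + (u * y + x * v) := by
    rw [hXeq', hZeq', hn1, hn2, hr1, hr2]
    ring
  rw [hmain, show X + Z + (u * y + x * v) = X + (Z + (u * y + x * v)) by ring,
    Nat.add_sub_cancel_left, Nat.add_sub_cancel_left]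
end

section
/- Let H1 be an r1 × n1 matrix over 𝔽₂ and H2 an r2 × n2 matrix over 𝔽₂, with H_X = [H1 ⊗ I_{n2} | I_{r1} ⊗ H2ᵀ]. Then the Hamming weight of the row of H_X indexed by the pair (i, c) with i ∈ Fin r1 and c ∈ Fin n2 equals the Hamming weight of row i of H1 plus the Hamming weight of column c of H2. In particular, the maximum row weight of H_X equals the maximum row weight of H1 plus the maximum column weight of H2. -/
open Matrix
open scoped Kronecker

/-- The Hamming weight of a vector over 𝔽₂: its number of nonzero entries. -/
def wt {ι : Type*} [Fintype ι] (v : ι → ZMod 2) : ℕ :=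
  (Finset.univ.filter fun i => v i ≠ 0).card

lemma wt_eq_sum {ι : Type*} [Fintype ι] (v : ι → ZMod 2) :
    wt v = ∑ i, if v i ≠ 0 then 1 else 0 := by
  simp [wt, Finset.card_filter]

lemma hgp_row_wt {r1 n1 r2 n2 : ℕ}
    (H1 : Matrix (Fin r1) (Fin n1) (ZMod 2)) (H2 : Matrix (Fin r2) (Fin n2) (ZMod 2))
    (i : Fin r1) (c : Fin n2) :
    wt (hgpX H1 H2 (i, c)) = wt (H1 i) + wt (fun i2 => H2 i2 c) := by
  simp only [wt_eq_sum, hgpX]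
  rw [Fintype.sum_sum_type]
  congr 1
  · rw [Fintype.sum_prod_type]
    refine Finset.sum_congr rfl fun j1 _ => ?_
    rw [Finset.sum_eq_single c]
    · simp [Matrix.one_apply]
    · intro b _ hb
      simp [Matrix.one_apply, Ne.symm hb]
    · simp
  · rw [Fintype.sum_prod_type, Finset.sum_eq_single i]
    · refine Finset.sum_congr rfl fun i2 _ => by simp [Matrix.one_apply]
    · intro b _ hb
      simp [Matrix.one_apply, Ne.symm hb]
    · simp

/-- The Hamming weight of the row of `H_X` indexed by `(i, c)` equals the Hamming weight of
row `i` of `H1` plus the Hamming weight of column `c` of `H2`; in particular the maximum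
row weight of `H_X` equals the maximum row weight of `H1` plus the maximum column weight
of `H2`. -/
theorem hgpX_row_weight {r1 n1 r2 n2 : ℕ} (hr1 : 0 < r1) (hn2 : 0 < n2)
    (H1 : Matrix (Fin r1) (Fin n1) (ZMod 2)) (H2 : Matrix (Fin r2) (Fin n2) (ZMod 2)) :
    (∀ (i : Fin r1) (c : Fin n2),
      wt (hgpX H1 H2 (i, c)) = wt (H1 i) + wt (fun i2 => H2 i2 c)) ∧
    Finset.univ.sup (fun ic : Fin r1 × Fin n2 => wt (hgpX H1 H2 ic)) =
      Finset.univ.sup (fun i : Fin r1 => wt (H1 i)) +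
        Finset.univ.sup (fun c : Fin n2 => wt (fun i2 => H2 i2 c)) := by
  refine ⟨hgp_row_wt H1 H2, ?_⟩
  have hne1 : (Finset.univ : Finset (Fin r1)).Nonempty := ⟨⟨0, hr1⟩, Finset.mem_univ _⟩
  have hne2 : (Finset.univ : Finset (Fin n2)).Nonempty := ⟨⟨0, hn2⟩, Finset.mem_univ _⟩
  apply le_antisymm
  · refine Finset.sup_le fun ic _ => ?_
    rw [show ic = (ic.1, ic.2) from rfl, hgp_row_wt H1 H2]
    exact add_le_add (Finset.le_sup (f := fun i : Fin r1 => wt (H1 i)) (Finset.mem_univ ic.1)) (Finset.le_sup (f := fun c : Fin n2 => wt fun i2 => H2 i2 c) (Finset.mem_univ ic.2))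
  · obtain ⟨i0, _, h1⟩ := Finset.exists_mem_eq_sup _ hne1 (fun i : Fin r1 => wt (H1 i))
    obtain ⟨c0, _, h2⟩ := Finset.exists_mem_eq_sup _ hne2 (fun c : Fin n2 => wt (fun i2 => H2 i2 c))
    rw [h1, h2, ← hgp_row_wt H1 H2]
    exact Finset.le_sup (f := fun ic : Fin r1 × Fin n2 => wt (hgpX H1 H2 ic)) (Finset.mem_univ (i0, c0))
end

section
/- Let H1 be an r1 × n1 matrix over 𝔽₂ such that every row and every column of H1 has Hamming weight at most s, and let R_d be the (d−1) × d repetition check matrix over 𝔽₂ (with d ≥ 2). Form the hypergraph product check matrices H_X = [H1 ⊗ I_d | I_{r1} ⊗ R_dᵀ] and H_Z = [I_{n1} ⊗ R_d | H1ᵀ ⊗ I_{d−1}]. Then every row of H_X and every row of H_Z has Hamming weight at most s + 2, and every column of the stacked matrix [H_X; H_Z] (the qubit use count of every qubit) has Hamming weight at most s + 2. -/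
open Matrix
open scoped Kronecker

/-- The (d−1) × d check matrix of the [d,1,d] repetition code over 𝔽₂:
its `i`-th row is `e_i + e_{i+1}`. -/
def repMat (d : ℕ) : Matrix (Fin (d - 1)) (Fin d) (ZMod 2) :=
  Matrix.of fun i j => if (j : ℕ) = (i : ℕ) ∨ (j : ℕ) = (i : ℕ) + 1 then 1 else 0

lemma wt_sum {α β : Type*} [Fintype α] [Fintype β] (v : α ⊕ β → ZMod 2) :
    wt v = wt (fun a => v (Sum.inl a)) + wt (fun b => v (Sum.inr b)) := by
  simp [wt, Finset.card_filter, Fintype.sum_sum_type]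

lemma wt_mul {α β : Type*} [Fintype α] [Fintype β] (f : α → ZMod 2) (g : β → ZMod 2) :
    wt (fun p : α × β => f p.1 * g p.2) = wt f * wt g := by
  simp only [wt, Finset.card_filter, Fintype.sum_prod_type, mul_ne_zero_iff]
  rw [Finset.sum_mul_sum]
  apply Finset.sum_congr rfl
  intro a _
  apply Finset.sum_congr rfl
  intro b _
  by_cases hf : f a = 0 <;> by_cases hg : g b = 0 <;> simp [hf, hg]

lemma wt_one_row {α : Type*} [Fintype α] [DecidableEq α] (i : α) :
    wt (fun j => (1 : Matrix α α (ZMod 2)) i j) = 1 := by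
  have h : (Finset.univ.filter fun j => (1 : Matrix α α (ZMod 2)) i j ≠ 0) = {i} := by
    ext j
    rcases eq_or_ne i j with h | h
    · subst h; simp [Matrix.one_apply]
    · simp [Matrix.one_apply, h, h.symm]
  simp [wt, h]

lemma wt_one_col {α : Type*} [Fintype α] [DecidableEq α] (j : α) :
    wt (fun i => (1 : Matrix α α (ZMod 2)) i j) = 1 := by
  have h : (Finset.univ.filter fun i => (1 : Matrix α α (ZMod 2)) i j ≠ 0) = {j} := by
    ext i
    rcases eq_or_ne i j with h | h <;> simp [Matrix.one_apply, h]
  simp [wt, h]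

lemma wt_le_two {α : Type*} [Fintype α] (v : α → ZMod 2) (g : α → ℕ)
    (hg : Function.Injective g) (a b : ℕ) (h : ∀ i, v i ≠ 0 → g i = a ∨ g i = b) :
    wt v ≤ 2 := by
  calc wt v ≤ ({a, b} : Finset ℕ).card := by
        apply Finset.card_le_card_of_injOn g
        · intro i hi
          simp only [Finset.mem_coe, Finset.mem_filter] at hi
          simpa using h i hi.2
        · exact fun i _ j _ hij => hg hij
    _ ≤ 2 := (Finset.card_insert_le _ _).trans (by simp)

lemma wt_repMat_row {d : ℕ} (i : Fin (d - 1)) : wt (repMat d i) ≤ 2 := by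
  apply wt_le_two _ (fun j : Fin d => (j : ℕ)) Fin.val_injective (i : ℕ) ((i : ℕ) + 1)
  intro j hj
  by_contra hc
  push_neg at hc
  simp [repMat, hc.1, hc.2] at hj

lemma wt_repMat_col {d : ℕ} (c : Fin d) : wt (fun i => repMat d i c) ≤ 2 := by
  apply wt_le_two _ (fun i : Fin (d - 1) => (i : ℕ)) Fin.val_injective (c : ℕ) ((c : ℕ) - 1)
  intro i hi
  have h : ((c : ℕ) = i ∨ (c : ℕ) = (i : ℕ) + 1) := by
    by_contra hc; push_neg at hc; simp [repMat, hc.1, hc.2] at hi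
  omega

/-- If every row and column of `H1` has Hamming weight at most `s`, then in the hypergraph
product of `H1` with the repetition code `R_d` (`d ≥ 2`), every row of `H_X` and of `H_Z`
has Hamming weight at most `s + 2`, and every column of the stacked matrix `[H_X; H_Z]`
(the qubit use count of every qubit) has Hamming weight at most `s + 2`. -/
theorem hgp_with_repetition_weights {r1 n1 s d : ℕ} (hd : 2 ≤ d)
    (H1 : Matrix (Fin r1) (Fin n1) (ZMod 2))
    (hrow : ∀ i : Fin r1, wt (H1 i) ≤ s)
    (hcol : ∀ j : Fin n1, wt (fun i => H1 i j) ≤ s) :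
    (∀ ic : Fin r1 × Fin d, wt (hgpX H1 (repMat d) ic) ≤ s + 2) ∧
    (∀ ji : Fin n1 × Fin (d - 1), wt (hgpZ H1 (repMat d) ji) ≤ s + 2) ∧
    (∀ x : (Fin n1 × Fin d) ⊕ (Fin r1 × Fin (d - 1)),
      wt (fun ic : Fin r1 × Fin d => hgpX H1 (repMat d) ic x) +
        wt (fun ji : Fin n1 × Fin (d - 1) => hgpZ H1 (repMat d) ji x) ≤ s + 2) := by
  refine ⟨?_, ?_, ?_⟩
  · rintro ⟨i, c⟩
    rw [wt_sum]
    have e1 : (fun a : Fin n1 × Fin d => hgpX H1 (repMat d) (i, c) (Sum.inl a))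
        = fun p : Fin n1 × Fin d => (H1 i) p.1 *
          (fun c' => (1 : Matrix (Fin d) (Fin d) (ZMod 2)) c c') p.2 := by
      funext p; simp [hgpX, Matrix.kroneckerMap_apply]
    have e2 : (fun b : Fin r1 × Fin (d - 1) => hgpX H1 (repMat d) (i, c) (Sum.inr b))
        = fun p : Fin r1 × Fin (d - 1) =>
          (fun i' => (1 : Matrix (Fin r1) (Fin r1) (ZMod 2)) i i') p.1 *
          (fun k => repMat d k c) p.2 := by
      funext p; simp [hgpX, Matrix.kroneckerMap_apply]
    rw [e1, e2, wt_mul (H1 i) (fun c' => (1 : Matrix (Fin d) (Fin d) (ZMod 2)) c c'),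
      wt_mul (fun i' => (1 : Matrix (Fin r1) (Fin r1) (ZMod 2)) i i') (fun k => repMat d k c),
      wt_one_row i, wt_one_row c]
    have h1 := hrow i
    have h2 := wt_repMat_col c
    nlinarith
  · rintro ⟨j, i'⟩
    rw [wt_sum]
    have e1 : (fun a : Fin n1 × Fin d => hgpZ H1 (repMat d) (j, i') (Sum.inl a))
        = fun p : Fin n1 × Fin d =>
          (fun j' => (1 : Matrix (Fin n1) (Fin n1) (ZMod 2)) j j') p.1 *
          (repMat d i') p.2 := by
      funext p; simp [hgpZ, Matrix.kroneckerMap_apply]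
    have e2 : (fun b : Fin r1 × Fin (d - 1) => hgpZ H1 (repMat d) (j, i') (Sum.inr b))
        = fun p : Fin r1 × Fin (d - 1) =>
          (fun i => H1 i j) p.1 *
          (fun k => (1 : Matrix (Fin (d - 1)) (Fin (d - 1)) (ZMod 2)) i' k) p.2 := by
      funext p; simp [hgpZ, Matrix.kroneckerMap_apply]
    rw [e1, e2, wt_mul (fun j' => (1 : Matrix (Fin n1) (Fin n1) (ZMod 2)) j j') (repMat d i'),
      wt_mul (fun i => H1 i j) (fun k => (1 : Matrix (Fin (d - 1)) (Fin (d - 1)) (ZMod 2)) i' k),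
      wt_one_row j, wt_one_row i']
    have h1 := hcol j
    have h2 := wt_repMat_row i'
    nlinarith
  · rintro (⟨j, c⟩ | ⟨i, k⟩)
    · have e1 : (fun ic : Fin r1 × Fin d => hgpX H1 (repMat d) ic (Sum.inl (j, c)))
          = fun p : Fin r1 × Fin d => (fun i => H1 i j) p.1 *
            (fun c' => (1 : Matrix (Fin d) (Fin d) (ZMod 2)) c' c) p.2 := by
        funext p; simp [hgpX, Matrix.kroneckerMap_apply]
      have e2 : (fun ji : Fin n1 × Fin (d - 1) => hgpZ H1 (repMat d) ji (Sum.inl (j, c)))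
          = fun p : Fin n1 × Fin (d - 1) =>
            (fun j' => (1 : Matrix (Fin n1) (Fin n1) (ZMod 2)) j' j) p.1 *
            (fun i' => repMat d i' c) p.2 := by
        funext p; simp [hgpZ, Matrix.kroneckerMap_apply]
      rw [e1, e2, wt_mul (fun i => H1 i j) (fun c' => (1 : Matrix (Fin d) (Fin d) (ZMod 2)) c' c),
        wt_mul (fun j' => (1 : Matrix (Fin n1) (Fin n1) (ZMod 2)) j' j) (fun i' => repMat d i' c),
        wt_one_col c, wt_one_col j]
      have h1 := hcol j
      have h2 := wt_repMat_col c
      nlinarith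
    · have e1 : (fun ic : Fin r1 × Fin d => hgpX H1 (repMat d) ic (Sum.inr (i, k)))
          = fun p : Fin r1 × Fin d =>
            (fun i' => (1 : Matrix (Fin r1) (Fin r1) (ZMod 2)) i' i) p.1 *
            (repMat d k) p.2 := by
        funext p; simp [hgpX, Matrix.kroneckerMap_apply]
      have e2 : (fun ji : Fin n1 × Fin (d - 1) => hgpZ H1 (repMat d) ji (Sum.inr (i, k)))
          = fun p : Fin n1 × Fin (d - 1) => (H1 i) p.1 *
            (fun i' => (1 : Matrix (Fin (d - 1)) (Fin (d - 1)) (ZMod 2)) i' k) p.2 := by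
        funext p; simp [hgpZ, Matrix.kroneckerMap_apply]
      rw [e1, e2, wt_mul (fun i' => (1 : Matrix (Fin r1) (Fin r1) (ZMod 2)) i' i) (repMat d k),
        wt_mul (H1 i) (fun i' => (1 : Matrix (Fin (d - 1)) (Fin (d - 1)) (ZMod 2)) i' k),
        wt_one_col i, wt_one_col k]
      have h1 := hrow i
      have h2 := wt_repMat_row k
      nlinarith
end

section
/- Let H be an r × n matrix over 𝔽₂, let f : Fin r → ℝ² assign a position to each check (row) and g : Fin n → ℝ² assign a position to each bit (column), and let ρ ≥ 0. Suppose H is geometrically ρ-local, i.e., H i j ≠ 0 implies dist(f i, g j) ≤ ρ. Then the transpose code check matrix Hᵀ, with check positions g and bit positions f, is also geometrically ρ-local: Hᵀ j i ≠ 0 implies dist(g j, f i) ≤ ρ. Moreover, if additionally the check positions are δ-separated for some δ > 0 (dist(f i, f i') ≥ δ for all i ≠ i'), then every row of Hᵀ has Hamming weight at most (1 + 2ρ/δ)². -/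
open Matrix

/-- If `H` is geometrically ρ-local with check positions `f` and bit positions `g`, then the
transpose code `Hᵀ` (checks at `g`, bits at `f`) is also geometrically ρ-local; moreover, if
the check positions are δ-separated (δ > 0), every row of `Hᵀ` has Hamming weight at most
`(1 + 2ρ/δ)²`. -/
theorem transpose_code_local {r n : ℕ}
    (H : Matrix (Fin r) (Fin n) (ZMod 2))
    (f : Fin r → EuclideanSpace ℝ (Fin 2)) (g : Fin n → EuclideanSpace ℝ (Fin 2))
    (ρ : ℝ) (hρ : 0 ≤ ρ)
    (hloc : ∀ i j, H i j ≠ 0 → dist (f i) (g j) ≤ ρ) :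
    (∀ j i, Hᵀ j i ≠ 0 → dist (g j) (f i) ≤ ρ) ∧
    ∀ δ : ℝ, 0 < δ → (∀ i i' : Fin r, i ≠ i' → δ ≤ dist (f i) (f i')) →
      ∀ j : Fin n, (wt (Hᵀ j) : ℝ) ≤ (1 + 2 * ρ / δ) ^ 2 := by
  constructor
  · intro j i h
    rw [dist_comm]
    exact hloc i j h
  · intro δ hδ hsep j
    classical
    set s : Finset (Fin r) := Finset.univ.filter fun i => Hᵀ j i ≠ 0 with hs
    have hhalf : (0:ℝ) < δ / 2 := by linarith
    -- inclusion of small balls in the big ball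
    have hinc : ∀ i ∈ s, Metric.ball (f i) (δ/2) ⊆ Metric.ball (g j) (ρ + δ/2) := by
      intro i hi x hx
      have hij : H i j ≠ 0 := by
        have := (Finset.mem_filter.mp hi).2
        simpa [Matrix.transpose_apply] using this
      have h1 : dist (f i) (g j) ≤ ρ := hloc i j hij
      have h2 : dist x (f i) < δ/2 := Metric.mem_ball.mp hx
      have := dist_triangle x (f i) (g j)
      exact Metric.mem_ball.mpr (by linarith)
    -- disjointness
    have hdisj : (s : Set (Fin r)).PairwiseDisjoint fun i => Metric.ball (f i) (δ/2) := by
      intro i _ i' _ hne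
      apply Metric.ball_disjoint_ball
      have := hsep i i' hne
      linarith
    -- measure computation
    have hmeas := MeasureTheory.measure_biUnion_finset (μ := MeasureTheory.volume) hdisj
      (fun i _ => Metric.isOpen_ball.measurableSet)
    have hle : ∑ i ∈ s, MeasureTheory.volume (Metric.ball (f i) (δ/2)) ≤
        MeasureTheory.volume (Metric.ball (g j) (ρ + δ/2)) := by
      rw [← hmeas]
      exact MeasureTheory.measure_mono (Set.iUnion₂_subset hinc)
    have hfr : Module.finrank ℝ (EuclideanSpace ℝ (Fin 2)) = 2 := by simp
    have hball : ∀ x : EuclideanSpace ℝ (Fin 2), ∀ t : ℝ, 0 ≤ t →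
        MeasureTheory.volume (Metric.ball x t) =
          ENNReal.ofReal (t ^ 2) * MeasureTheory.volume (Metric.ball (0:EuclideanSpace ℝ (Fin 2)) 1) := by
      intro x t ht
      rw [MeasureTheory.Measure.addHaar_ball MeasureTheory.volume x ht, hfr]
    set c := MeasureTheory.volume (Metric.ball (0:EuclideanSpace ℝ (Fin 2)) 1) with hc
    have hc0 : c ≠ 0 := (Metric.measure_ball_pos _ _ one_pos).ne'
    have hctop : c ≠ ⊤ := MeasureTheory.measure_ball_lt_top.ne
    have hle2 : (s.card : ENNReal) * ENNReal.ofReal ((δ/2)^2) * c ≤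
        ENNReal.ofReal ((ρ + δ/2)^2) * c := by
      calc (s.card : ENNReal) * ENNReal.ofReal ((δ/2)^2) * c
          = ∑ i ∈ s, MeasureTheory.volume (Metric.ball (f i) (δ/2)) := by
            rw [Finset.sum_congr rfl (fun i _ => hball (f i) (δ/2) hhalf.le)]
            rw [Finset.sum_const, nsmul_eq_mul, mul_assoc]
        _ ≤ MeasureTheory.volume (Metric.ball (g j) (ρ + δ/2)) := hle
        _ = ENNReal.ofReal ((ρ + δ/2)^2) * c := hball _ _ (by linarith)
    have hle3 : (s.card : ENNReal) * ENNReal.ofReal ((δ/2)^2) ≤ ENNReal.ofReal ((ρ + δ/2)^2) :=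
      (ENNReal.mul_le_mul_iff_left hc0 hctop).mp hle2
    have hle4 : (s.card : ℝ) * (δ/2)^2 ≤ (ρ + δ/2)^2 := by
      have : ENNReal.ofReal ((s.card : ℝ) * (δ/2)^2) ≤ ENNReal.ofReal ((ρ + δ/2)^2) := by
        rw [ENNReal.ofReal_mul (by positivity), ENNReal.ofReal_natCast]
        exact hle3
      exact (ENNReal.ofReal_le_ofReal_iff (by positivity)).mp this
    have hwt : (wt (Hᵀ j) : ℝ) = (s.card : ℝ) := rfl
    rw [hwt]
    have hkey : (1 + 2 * ρ / δ) ^ 2 * (δ/2)^2 = (ρ + δ/2)^2 := by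
      field_simp
      ring
    have hsq : (0:ℝ) < (δ/2)^2 := by positivity
    nlinarith [hle4, hkey]
end
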